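/- Let ρ be a dissectible solution notion and f : Θ → X a social choice function. Then γ^{(ρ,f)} is (ρ,f,ϑ*)-consistent on product sets: for every E ∈ 𝒮 of the form E = ∏_{i∈I} E_i with each E_i a nonempty subset of Θ_i, all θ, θ' ∈ E and every i ∈ I, if ρ[f,(γ^{(ρ,f)},E),θ,θ',i,E] = 0 then θ'_i ∈ γ^{(ρ,f)}_i[E,θ]. -/
import Mathlib


open scoped Classical

namespace SeqMech

variable {I : Type*} {Θi : I → Type*} {X : Type*}

/-- Projection of a set of states onto agent `i`'s coordinate. -/
def proj (i : I) (E : Set (∀ j, Θi j)) : Set (Θi i) :=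
  (fun θ => θ i) '' E

/-- Projection of a set of states onto the coordinates of the agents other than `i`. -/
def projNeg (i : I) (E : Set (∀ j, Θi j)) :
    Set (∀ j : {j : I // j ≠ i}, Θi j.1) :=
  (fun θ (j : {j : I // j ≠ i}) => θ j.1) '' E

/-- The semi-operator property: nonempty sets are mapped to nonempty sets. -/
def IsSemiOp (γ : Set (∀ j, Θi j) → (∀ j, Θi j) → Set (∀ j, Θi j)) : Prop :=
  ∀ E θ, E.Nonempty → (γ E θ).Nonempty

/-- A solution notion: `R f γ E θ θ' i Fhat` means `ρ[f,(γ,E),θ,θ',i,Fhat] = 1`.  Its value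
depends only on `(f, γ_i[E,θ], θ_i, θ'_i, Fhat_{-i})`. -/
structure SolutionNotion (I : Type*) (Θi : I → Type*) (X : Type*) where
  R : ((∀ j, Θi j) → X) →
      (Set (∀ j, Θi j) → (∀ j, Θi j) → Set (∀ j, Θi j)) →
      Set (∀ j, Θi j) → (∀ j, Θi j) → (∀ j, Θi j) → I → Set (∀ j, Θi j) → Prop
  meas : ∀ f γ γ' E E' θ τ θ' τ' (i : I) Fhat Fhat',
      proj i (γ E θ) = proj i (γ' E' τ) →
      θ i = τ i → θ' i = τ' i →
      projNeg i Fhat = projNeg i Fhat' →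
      (R f γ E θ θ' i Fhat ↔ R f γ' E' τ τ' i Fhat')

/-- Dissectibility of a solution notion. -/
def Dissectible (ρ : SolutionNotion I Θi X) : Prop :=
  ∀ f γ E θ θ' (i : I) Fhat,
    IsSemiOp γ → E.Nonempty → θ ∈ E → θ' ∈ E →
    (¬ ρ.R f γ E θ θ' i Fhat ↔
      ∃ τ ∈ γ E θ, ∃ γ' : Set (∀ j, Θi j) → (∀ j, Θi j) → Set (∀ j, Θi j),
        IsSemiOp γ' ∧ γ' E θ = {θ, τ} ∧ ¬ ρ.R f γ' E θ θ' i Fhat)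

/-- `θ >_i^{[(ρ,f),(γ,E)]} θ'`. -/
def gtRel (ρ : SolutionNotion I Θi X) (f : (∀ j, Θi j) → X)
    (γ : Set (∀ j, Θi j) → (∀ j, Θi j) → Set (∀ j, Θi j))
    (E : Set (∀ j, Θi j)) (i : I) (θ θ' : ∀ j, Θi j) : Prop :=
  θ ∈ E ∧ θ' ∈ E ∧ ¬ ρ.R f γ E θ θ' i E

/-- `θ ∼_i^{[(ρ,f),(γ,E)]} θ'`. -/
def simRel (ρ : SolutionNotion I Θi X) (f : (∀ j, Θi j) → X)
    (γ : Set (∀ j, Θi j) → (∀ j, Θi j) → Set (∀ j, Θi j))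
    (E : Set (∀ j, Θi j)) (i : I) (θ θ' : ∀ j, Θi j) : Prop :=
  θ i = θ' i ∨ gtRel ρ f γ E i θ θ' ∨ gtRel ρ f γ E i θ' θ

/-- `canonN ρ f n` is the semi-operator `γ^{(ρ,f)-(n+1)}`. -/
noncomputable def canonN (ρ : SolutionNotion I Θi X) (f : (∀ j, Θi j) → X) :
    ℕ → Set (∀ j, Θi j) → (∀ j, Θi j) → Set (∀ j, Θi j)
  | 0 => fun E θ => if θ ∈ E then {θ} else E
  | n + 1 => fun E θ =>
      if θ ∈ E then
        ⋃ τ ∈ canonN ρ f n E θ,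
          {θ' ∈ E | ∀ i, simRel ρ f (canonN ρ f n) E i τ θ'}
      else E

/-- The canonical semi-operator `γ^{(ρ,f)}`. -/
noncomputable def canon (ρ : SolutionNotion I Θi X) (f : (∀ j, Θi j) → X) :
    Set (∀ j, Θi j) → (∀ j, Θi j) → Set (∀ j, Θi j) :=
  fun E θ => if θ ∈ E then ⋃ n, canonN ρ f n E θ else E

lemma mem_canonN_self (ρ : SolutionNotion I Θi X) (f : (∀ j, Θi j) → X)
    (n : ℕ) (E : Set (∀ j, Θi j)) (θ : ∀ j, Θi j) (hθ : θ ∈ E) :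
    θ ∈ canonN ρ f n E θ := by
  induction n with
  | zero => simp [canonN, hθ]
  | succ n ih =>
    simp only [canonN, if_pos hθ]
    exact Set.mem_biUnion ih ⟨hθ, fun j => Or.inl rfl⟩

lemma canonN_notMem (ρ : SolutionNotion I Θi X) (f : (∀ j, Θi j) → X)
    (n : ℕ) (E : Set (∀ j, Θi j)) (θ : ∀ j, Θi j) (hθ : θ ∉ E) :
    canonN ρ f n E θ = E := by
  cases n <;> simp [canonN, hθ]

lemma isSemiOp_canonN (ρ : SolutionNotion I Θi X) (f : (∀ j, Θi j) → X) (n : ℕ) :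
    IsSemiOp (canonN ρ f n) := by
  intro F σ hF
  by_cases hσ : σ ∈ F
  · exact ⟨σ, mem_canonN_self ρ f n F σ hσ⟩
  · rw [canonN_notMem ρ f n F σ hσ]; exact hF

lemma isSemiOp_canon (ρ : SolutionNotion I Θi X) (f : (∀ j, Θi j) → X) :
    IsSemiOp (canon ρ f) := by
  intro F σ hF
  by_cases hσ : σ ∈ F
  · exact ⟨σ, by
      simp only [canon, if_pos hσ]
      exact Set.mem_iUnion.mpr ⟨0, mem_canonN_self ρ f 0 F σ hσ⟩⟩
  · simpa [canon, hσ] using hF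

/-- for a dissectible solution notion `ρ` and an SCF `f`, the canonical
semi-operator `γ^{(ρ,f)}` is `(ρ,f,ϑ*)`-consistent on product sets. -/
theorem canon_consistent
    [Fintype I] [Nonempty I] [∀ i, Fintype (Θi i)] [∀ i, Nonempty (Θi i)]
    (ρ : SolutionNotion I Θi X) (hρ : Dissectible ρ) (f : (∀ j, Θi j) → X)
    (Ei : ∀ i, Set (Θi i)) (hEi : ∀ i, (Ei i).Nonempty)
    (E : Set (∀ j, Θi j)) (hE : E = Set.pi Set.univ Ei)
    (θ θ' : ∀ j, Θi j) (hθ : θ ∈ E) (hθ' : θ' ∈ E) (i : I)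
    (h0 : ¬ ρ.R f (canon ρ f) E θ θ' i E) :
    θ' i ∈ proj i (canon ρ f E θ) := by
  classical
  have hne : E.Nonempty := ⟨θ, hθ⟩
  have hcanon : canon ρ f E θ = ⋃ n, canonN ρ f n E θ := if_pos hθ
  obtain ⟨τ, hτ, γ', hγ'semi, hγ'eq, hγ'R⟩ :=
    (hρ f (canon ρ f) E θ θ' i E (isSemiOp_canon ρ f) hne hθ hθ').mp h0
  rw [hcanon] at hτ
  obtain ⟨n, hτn⟩ := Set.mem_iUnion.mp hτ
  set θ'' := Function.update θ i (θ' i) with hθ''def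
  have hθ''i : θ'' i = θ' i := Function.update_self i (θ' i) θ
  have hθ''E : θ'' ∈ E := by
    rw [hE] at hθ hθ' ⊢
    intro j hj
    by_cases hji : j = i
    · subst hji; rw [hθ''i]; exact hθ' j hj
    · rw [hθ''def, Function.update_of_ne hji]; exact hθ j hj
  have hRiff : ρ.R f γ' E θ θ'' i E ↔ ρ.R f γ' E θ θ' i E :=
    ρ.meas f γ' γ' E E θ θ θ'' θ' i E E rfl rfl hθ''i rfl
  have hnotR : ¬ ρ.R f (canonN ρ f n) E θ θ'' i E :=
    (hρ f (canonN ρ f n) E θ θ'' i E (isSemiOp_canonN ρ f n) hne hθ hθ''E).mpr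
      ⟨τ, hτn, γ', hγ'semi, hγ'eq, fun h => hγ'R (hRiff.mp h)⟩
  have hθ''mem : θ'' ∈ canonN ρ f (n + 1) E θ := by
    simp only [canonN, if_pos hθ]
    refine Set.mem_biUnion (mem_canonN_self ρ f n E θ hθ) ⟨hθ''E, fun j => ?_⟩
    by_cases hji : j = i
    · subst hji
      exact Or.inr (Or.inl ⟨hθ, hθ''E, hnotR⟩)
    · exact Or.inl (Function.update_of_ne hji _ _).symm
  exact ⟨θ'', by rw [hcanon]; exact Set.mem_iUnion.mpr ⟨n + 1, hθ''mem⟩, hθ''i⟩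

end SeqMech
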